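/- (Reducibility of confluent leading blocks.) Let (A, b) be an s-stage DIRK scheme (A lower triangular, c = A e) whose first r abscissas coincide: c₁ = … = c_r, with 2 ≤ r ≤ s. Define the reduced (s − r + 1)-stage scheme (A*, b*) by: a*₁₁ = a₁₁; for i ≥ 2, a*_{i1} = Σ_{j=1}^{r} a_{r+i−1, j} and a*_{ij} = a_{r+i−1, r+j−1} for j ≥ 2; b*₁ = Σ_{j=1}^{r} b_j and b*_i = b_{r+i−1} for i ≥ 2. Then for every m ≥ 1, every f : ℝ × ℝ^m → ℝ^m, every t_n ∈ ℝ, Δt ∈ ℝ, and u_n ∈ ℝ^m: (i) if g* = (g*₁, …, g*_{s−r+1}) satisfies the stage equations g*_i = u_n + Δt Σ_j a*_{ij} f(t_n + c*_j Δt, g*_j) of the reduced scheme, then the padded vector g with g₁ = … = g_r = g*₁ and g_{r+i−1} = g*_i (i ≥ 2) satisfies the stage equations of (A, b), and the step updates agree: u_n + Δt Σ_j b_j f(t_n + c_j Δt, g_j) = u_n + Δt Σ_j b*_j f(t_n + c*_j Δt, g*_j); (ii) conversely, if g satisfies the stage equations of (A, b) and g₁ = … = g_r, then the reduced vector (g₁,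 g_{r+1}, …, g_s) satisfies the stage equations of (A*, b*) with the same step update. -/

import Mathlib

open Matrix

section helpers
variable {r s : ℕ}

lemma rk_embsucc (hr : 2 ≤ r) (hrs : r ≤ s)
    (emb : Fin (s - r + 1) → Fin s)
    (hemb : ∀ i : Fin (s - r + 1),
      emb i = if (i : ℕ) = 0 then ⟨0, by omega⟩
        else ⟨r - 1 + (i : ℕ), by have := i.isLt; omega⟩)
    (j : Fin (s - r)) : ((emb j.succ : Fin s) : ℕ) = r + (j : ℕ) := by
  rw [hemb, if_neg (by simp [Fin.val_succ])]
  simp only [Fin.val_succ]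
  omega

lemma rk_split (hr : 2 ≤ r) (hrs : r ≤ s)
    (emb : Fin (s - r + 1) → Fin s)
    (hemb : ∀ i : Fin (s - r + 1),
      emb i = if (i : ℕ) = 0 then ⟨0, by omega⟩
        else ⟨r - 1 + (i : ℕ), by have := i.isLt; omega⟩)
    {M : Type*} [AddCommMonoid M] (h : Fin s → M) :
    ∑ j, h j = (∑ j ∈ Finset.univ.filter (fun j : Fin s => (j : ℕ) < r), h j)
      + ∑ j : Fin (s - r), h (emb j.succ) := by
  have hembsucc := rk_embsucc hr hrs emb hemb
  rw [← Finset.sum_filter_add_sum_filter_not Finset.univ (fun j : Fin s => (j : ℕ) < r) h]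
  congr 1
  refine Finset.sum_bij' (i := fun (j : Fin s) hj =>
      (⟨(j : ℕ) - r, by
        simp only [Finset.mem_filter, Finset.mem_univ, true_and, not_lt] at hj
        have := j.isLt; omega⟩ : Fin (s - r)))
    (j := fun j _ => emb j.succ) ?_ ?_ ?_ ?_ ?_
  · intro a ha; exact Finset.mem_univ _
  · intro a _
    simp only [Finset.mem_filter, Finset.mem_univ, true_and, not_lt]
    rw [hembsucc]; omega
  · intro a ha
    simp only [Finset.mem_filter, Finset.mem_univ, true_and, not_lt] at ha
    apply Fin.ext
    rw [hembsucc]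
    simp only
    omega
  · intro a _
    apply Fin.ext
    simp only [hembsucc]
    omega
  · intro a ha
    simp only [Finset.mem_filter, Finset.mem_univ, true_and, not_lt] at ha
    congr 1
    apply Fin.ext
    rw [hembsucc]
    simp only
    omega

lemma rk_key (hr : 2 ≤ r) (hrs : r ≤ s)
    (emb : Fin (s - r + 1) → Fin s)
    (hemb : ∀ i : Fin (s - r + 1),
      emb i = if (i : ℕ) = 0 then ⟨0, by omega⟩
        else ⟨r - 1 + (i : ℕ), by have := i.isLt; omega⟩)
    {m : ℕ}
    (F : Fin s → Fin m → ℝ) (F' : Fin (s - r + 1) → Fin m → ℝ)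
    (h0 : ∀ j : Fin s, (j : ℕ) < r → F j = F' ⟨0, by omega⟩)
    (h1 : ∀ j : Fin (s - r), F (emb j.succ) = F' j.succ)
    (w : Fin s → ℝ) (w' : Fin (s - r + 1) → ℝ)
    (hw0 : w' ⟨0, by omega⟩ = ∑ j ∈ Finset.univ.filter (fun j : Fin s => (j : ℕ) < r), w j)
    (hw1 : ∀ j : Fin (s - r), w' j.succ = w (emb j.succ)) :
    ∑ j, w j • F j = ∑ j, w' j • F' j := by
  rw [rk_split hr hrs emb hemb (fun j => w j • F j), Fin.sum_univ_succ]
  congr 1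
  · have e : ∀ j ∈ Finset.univ.filter (fun j : Fin s => (j : ℕ) < r),
        w j • F j = w j • F' ⟨0, by omega⟩ := by
      intro j hj
      rw [h0 j (by simpa using hj)]
    rw [Finset.sum_congr rfl e, ← Finset.sum_smul, ← hw0]; rfl
  · exact Finset.sum_congr rfl (fun j _ => by rw [hw1 j, h1 j])

end helpers

/-- Reducibility of confluent leading blocks: if the first `r` abscissas of an `s`-stage
DIRK scheme coincide, then solutions of the stage equations of the reduced
`(s−r+1)`-stage scheme pad to solutions of the original stage equations with the same
step update (part (i)), and conversely (part (ii)). Indices are 0-based: original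
stages `0,…,r−1` collapse to reduced stage `0`, and reduced stage `i ≥ 1` corresponds
to original stage `r−1+i`. -/
theorem stmt9 {s r : ℕ} (hr : 2 ≤ r) (hrs : r ≤ s)
    (A : Matrix (Fin s) (Fin s) ℝ) (b : Fin s → ℝ)
    (hlow : ∀ i j : Fin s, i < j → A i j = 0)
    (c : Fin s → ℝ) (hc : c = A.mulVec fun _ => 1)
    (hconf : ∀ j : Fin s, (j : ℕ) < r → c j = c ⟨0, by omega⟩)
    (emb : Fin (s - r + 1) → Fin s)
    (hemb : ∀ i : Fin (s - r + 1),
      emb i = if (i : ℕ) = 0 then ⟨0, by omega⟩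
        else ⟨r - 1 + (i : ℕ), by have := i.isLt; omega⟩)
    (A' : Matrix (Fin (s - r + 1)) (Fin (s - r + 1)) ℝ) (b' : Fin (s - r + 1) → ℝ)
    (hA'00 : A' ⟨0, by omega⟩ ⟨0, by omega⟩ = A ⟨0, by omega⟩ ⟨0, by omega⟩)
    (hA'0j : ∀ j : Fin (s - r + 1), (j : ℕ) ≠ 0 → A' ⟨0, by omega⟩ j = 0)
    (hA'i0 : ∀ i : Fin (s - r + 1), (i : ℕ) ≠ 0 →
      A' i ⟨0, by omega⟩ =
        ∑ j ∈ Finset.univ.filter (fun j : Fin s => (j : ℕ) < r), A (emb i) j)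
    (hA'ij : ∀ i j : Fin (s - r + 1), (i : ℕ) ≠ 0 → (j : ℕ) ≠ 0 →
      A' i j = A (emb i) (emb j))
    (hb'0 : b' ⟨0, by omega⟩ = ∑ j ∈ Finset.univ.filter (fun j : Fin s => (j : ℕ) < r), b j)
    (hb'i : ∀ i : Fin (s - r + 1), (i : ℕ) ≠ 0 → b' i = b (emb i))
    (c' : Fin (s - r + 1) → ℝ) (hc' : c' = A'.mulVec fun _ => 1)
    {m : ℕ} (hm : 1 ≤ m) (f : ℝ → (Fin m → ℝ) → (Fin m → ℝ))
    (tn Δt : ℝ) (un : Fin m → ℝ) :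
    -- (i) padded solutions of the reduced scheme solve the original scheme
    (∀ g' : Fin (s - r + 1) → Fin m → ℝ,
      (∀ i, g' i = un + Δt • ∑ j, A' i j • f (tn + c' j * Δt) (g' j)) →
      ∀ g : Fin s → Fin m → ℝ,
        (∀ j : Fin s, g j = if h : (j : ℕ) < r then g' ⟨0, by omega⟩
          else g' ⟨(j : ℕ) - r + 1, by have := j.isLt; omega⟩) →
        (∀ i, g i = un + Δt • ∑ j, A i j • f (tn + c j * Δt) (g j)) ∧
          un + Δt • ∑ j, b j • f (tn + c j * Δt) (g j) =
            un + Δt • ∑ j, b' j • f (tn + c' j * Δt) (g' j)) ∧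
    -- (ii) solutions of the original scheme with coinciding first r stages reduce
    (∀ g : Fin s → Fin m → ℝ,
      (∀ i, g i = un + Δt • ∑ j, A i j • f (tn + c j * Δt) (g j)) →
      (∀ j : Fin s, (j : ℕ) < r → g j = g ⟨0, by omega⟩) →
      ∀ g' : Fin (s - r + 1) → Fin m → ℝ,
        (∀ i, g' i = g (emb i)) →
        (∀ i, g' i = un + Δt • ∑ j, A' i j • f (tn + c' j * Δt) (g' j)) ∧
          un + Δt • ∑ j, b j • f (tn + c j * Δt) (g j) =
            un + Δt • ∑ j, b' j • f (tn + c' j * Δt) (g' j)) := by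
  have hembsucc := rk_embsucc hr hrs emb hemb
  have crow : ∀ i : Fin s, c i = ∑ j, A i j := by
    intro i; rw [hc]; simp [Matrix.mulVec, dotProduct]
  have c'row : ∀ i : Fin (s - r + 1), c' i = ∑ j, A' i j := by
    intro i; rw [hc']; simp [Matrix.mulVec, dotProduct]
  have hc0 : c ⟨0, by omega⟩ = A ⟨0, by omega⟩ ⟨0, by omega⟩ := by
    rw [crow]
    apply Fintype.sum_eq_single
    intro j hj
    apply hlow
    have hj' : (j : ℕ) ≠ 0 := fun h => hj (Fin.ext h)
    exact Fin.lt_def.mpr (Nat.pos_of_ne_zero hj')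
  have hfilt : ∀ i : Fin s, (i : ℕ) < r →
      (∑ j ∈ Finset.univ.filter (fun j : Fin s => (j : ℕ) < r), A i j)
        = A ⟨0, by omega⟩ ⟨0, by omega⟩ := by
    intro i hi
    have hsplit := rk_split hr hrs emb hemb (A i)
    have htail : ∀ j : Fin (s - r), A i (emb j.succ) = 0 := by
      intro j
      apply hlow
      rw [Fin.lt_def, hembsucc]
      omega
    rw [Finset.sum_congr rfl (fun j _ => htail j), Finset.sum_const_zero, add_zero] at hsplit
    rw [← hsplit, ← crow, hconf i hi, hc0]
  have hc'0 : c' ⟨0, by omega⟩ = c ⟨0, by omega⟩ := by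
    rw [c'row, hc0]
    rw [Fintype.sum_eq_single (⟨0, by omega⟩ : Fin (s - r + 1))
      (fun j hj => hA'0j j (fun h => hj (Fin.ext h)))]
    exact hA'00
  have hc'succ : ∀ i : Fin (s - r), c' i.succ = c (emb i.succ) := by
    intro i
    rw [c'row, crow, rk_split hr hrs emb hemb (A (emb i.succ)), Fin.sum_univ_succ]
    congr 1
    · exact hA'i0 i.succ (by simp)
    · exact Finset.sum_congr rfl fun j _ => hA'ij i.succ j.succ (by simp) (by simp)
  constructor
  · -- part (i)
    intro g' hg' g hg
    have hgeq0 : ∀ j : Fin s, (j : ℕ) < r → g j = g' ⟨0, by omega⟩ := by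
      intro j hj; rw [hg j, dif_pos hj]
    have hgsucc : ∀ j : Fin (s - r), g (emb j.succ) = g' j.succ := by
      intro j
      rw [hg, dif_neg (by rw [hembsucc]; omega)]
      exact congrArg g' (Fin.ext (by
        show ((emb j.succ : Fin s) : ℕ) - r + 1 = (j : ℕ) + 1
        rw [hembsucc]; omega))
    have h0 : ∀ j : Fin s, (j : ℕ) < r →
        f (tn + c j * Δt) (g j) = f (tn + c' ⟨0, by omega⟩ * Δt) (g' ⟨0, by omega⟩) := by
      intro j hj; rw [hconf j hj, ← hc'0, hgeq0 j hj]
    have h1 : ∀ j : Fin (s - r),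
        f (tn + c (emb j.succ) * Δt) (g (emb j.succ))
          = f (tn + c' j.succ * Δt) (g' j.succ) := by
      intro j; rw [← hc'succ j, hgsucc j]
    constructor
    · intro i
      by_cases hi : (i : ℕ) < r
      · rw [hgeq0 i hi, hg' ⟨0, by omega⟩]
        have key := rk_key hr hrs emb hemb
          (fun j => f (tn + c j * Δt) (g j)) (fun j => f (tn + c' j * Δt) (g' j))
          h0 h1 (A i) (A' ⟨0, by omega⟩)
          (by rw [hA'00]; exact (hfilt i hi).symm)
          (fun j => by
            rw [hA'0j _ (by simp), hlow i (emb j.succ) (by rw [Fin.lt_def, hembsucc]; omega)])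
        rw [key]
      · have i' : Fin (s - r + 1) := ⟨(i : ℕ) - r + 1, by have := i.isLt; omega⟩
        have hgi : g i = g' ⟨(i : ℕ) - r + 1, by have := i.isLt; omega⟩ := by
          rw [hg i, dif_neg hi]
        have hembi : emb ⟨(i : ℕ) - r + 1, by have := i.isLt; omega⟩ = i := by
          rw [hemb, if_neg (by simp)]
          apply Fin.ext
          simp only
          omega
        rw [hgi, hg' ⟨(i : ℕ) - r + 1, by have := i.isLt; omega⟩]
        have key := rk_key hr hrs emb hemb
          (fun j => f (tn + c j * Δt) (g j)) (fun j => f (tn + c' j * Δt) (g' j))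
          h0 h1 (A i) (A' ⟨(i : ℕ) - r + 1, by have := i.isLt; omega⟩)
          (by rw [hA'i0 _ (by simp), hembi])
          (fun j => by rw [hA'ij _ j.succ (by simp) (by simp), hembi])
        rw [key]
    · have key := rk_key hr hrs emb hemb
        (fun j => f (tn + c j * Δt) (g j)) (fun j => f (tn + c' j * Δt) (g' j))
        h0 h1 b b' hb'0 (fun j => hb'i j.succ (by simp))
      rw [key]
  · -- part (ii)
    intro g hg hconfg g' hg'
    have hemb0 : emb ⟨0, by omega⟩ = ⟨0, by omega⟩ := by
      rw [hemb, if_pos rfl]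
    have hg'0 : g' ⟨0, by omega⟩ = g ⟨0, by omega⟩ := by
      rw [hg', hemb0]
    have h0 : ∀ j : Fin s, (j : ℕ) < r →
        f (tn + c j * Δt) (g j) = f (tn + c' ⟨0, by omega⟩ * Δt) (g' ⟨0, by omega⟩) := by
      intro j hj; rw [hconf j hj, ← hc'0, hconfg j hj, ← hg'0]
    have h1 : ∀ j : Fin (s - r),
        f (tn + c (emb j.succ) * Δt) (g (emb j.succ))
          = f (tn + c' j.succ * Δt) (g' j.succ) := by
      intro j; rw [← hc'succ j, hg' j.succ]
    constructor
    · intro i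
      by_cases hi : (i : ℕ) = 0
      · have hieq : i = ⟨0, by omega⟩ := Fin.ext hi
        rw [hieq, hg'0, hg ⟨0, by omega⟩]
        have key := rk_key hr hrs emb hemb
          (fun j => f (tn + c j * Δt) (g j)) (fun j => f (tn + c' j * Δt) (g' j))
          h0 h1 (A ⟨0, by omega⟩) (A' ⟨0, by omega⟩)
          (by rw [hA'00]; exact (hfilt ⟨0, by omega⟩ (by omega)).symm)
          (fun j => by
            rw [hA'0j _ (by simp),
              hlow ⟨0, by omega⟩ (emb j.succ) (Fin.lt_def.mpr (by
                show 0 < ((emb j.succ : Fin s) : ℕ); rw [hembsucc]; omega))])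
        rw [key]
      · rw [hg' i, hg (emb i)]
        have key := rk_key hr hrs emb hemb
          (fun j => f (tn + c j * Δt) (g j)) (fun j => f (tn + c' j * Δt) (g' j))
          h0 h1 (A (emb i)) (A' i)
          (hA'i0 i hi)
          (fun j => hA'ij i j.succ hi (by simp))
        rw [key]
    · have key := rk_key hr hrs emb hemb
        (fun j => f (tn + c j * Δt) (g j)) (fun j => f (tn + c' j * Δt) (g' j))
        h0 h1 b b' hb'0 (fun j => hb'i j.succ (by simp))
      rw [key]
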